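/- Let d ≥ 1 be an integer and let h ∈ ℝ^d with h ≠ 0. Then, with Ψ₁(u) = ∏_{i=1}^{d} sinc(u_i/4)⁴: (i) Ψ₁(h) ≤ 256·d²/‖h‖₂⁴; (ii) for every coordinate u ∈ {1, …, d}, |(∂_u Ψ₁)(h)| ≤ 512·d²/‖h‖₂⁴; (iii) for all coordinates u, v ∈ {1, …, d}, |(∂_u∂_v Ψ₁)(h)| ≤ 1024·d²/‖h‖₂⁴. -/

import Mathlib

open Real hiding sinc abs_sinc_le_one

/-- The cardinal sine function: `sinc z = sin z / z` for `z ≠ 0`, `sinc 0 = 1`. -/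
noncomputable def sinc (x : ℝ) : ℝ := if x = 0 then 1 else Real.sin x / x

/-- The sinc-4 kernel (bandwidth one) on `ℝ^d`. -/
noncomputable def Psi1 (d : ℕ) (u : EuclideanSpace ℝ (Fin d)) : ℝ :=
  ∏ i, sinc (u i / 4) ^ 4

noncomputable def sg1 (x : ℝ) : ℝ :=
  if x = 0 then 0 else cos x / x - sin x / x ^ 2

noncomputable def sg2 (x : ℝ) : ℝ :=
  if x = 0 then -(1/3) else -(sin x / x) - 2 * cos x / x ^ 2 + 2 * sin x / x ^ 3


lemma abs_sub' (a b : ℝ) : |a - b| ≤ |a| + |b| := by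
  calc |a - b| = |a + -b| := by ring_nf
    _ ≤ |a| + |-b| := abs_add_le _ _
    _ = |a| + |b| := by rw [abs_neg]

lemma abs_sinc_le_one (x : ℝ) : |sinc x| ≤ 1 := by
  unfold sinc
  split_ifs with hx
  · simp
  · rw [abs_div]
    exact div_le_one_of_le₀ (abs_sin_le_abs) (abs_nonneg x)

lemma abs_sinc_le_inv {x : ℝ} (hx : x ≠ 0) : |sinc x| ≤ 1 / |x| := by
  unfold sinc
  rw [if_neg hx, abs_div]
  gcongr
  exact abs_sin_le_one x

lemma abs_sin_sub {x : ℝ} (hx : |x| ≤ 1) : |sin x - x| ≤ |x| ^ 3 := by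
  have hs := Real.sin_bound hx
  have h3 : |x| ^ 4 ≤ |x| ^ 3 := pow_le_pow_of_le_one (abs_nonneg x) hx (by norm_num)
  have h1 : |sin x - x| ≤ |sin x - (x - x ^ 3 / 6)| + |x ^ 3 / 6| := by
    have he : sin x - x = (sin x - (x - x ^ 3 / 6)) - x ^ 3 / 6 := by ring
    rw [he]; exact abs_sub' _ _
  have h2 : |x ^ 3 / 6| = |x| ^ 3 / 6 := by rw [abs_div, abs_pow]; norm_num
  nlinarith [pow_nonneg (abs_nonneg x) 3, pow_nonneg (abs_nonneg x) 4]

lemma abs_key {x : ℝ} (hx : |x| ≤ 1) : |x * cos x - sin x + x ^ 3 / 3| ≤ |x| ^ 4 / 6 := by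
  have hs := Real.sin_bound hx
  have hc := Real.cos_bound hx
  have heq : x * cos x - sin x + x ^ 3 / 3
      = x * (cos x - (1 - x ^ 2 / 2)) - (sin x - (x - x ^ 3 / 6)) := by ring
  rw [heq]
  have h1 : |x * (cos x - (1 - x ^ 2 / 2)) - (sin x - (x - x ^ 3 / 6))|
      ≤ |x| * |cos x - (1 - x ^ 2 / 2)| + |sin x - (x - x ^ 3 / 6)| := by
    refine (abs_sub' _ _).trans ?_
    rw [abs_mul]
  have h5 : |x| * |cos x - (1 - x ^ 2 / 2)| ≤ |x| ^ 4 * (5/96) := by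
    calc |x| * |cos x - (1 - x ^ 2 / 2)| ≤ 1 * (|x| ^ 4 * (5/96)) := by
          apply mul_le_mul hx hc (abs_nonneg _) (by norm_num)
      _ = |x| ^ 4 * (5/96) := by ring
  nlinarith [pow_nonneg (abs_nonneg x) 4]

lemma abs_num_small {x : ℝ} (hx : |x| ≤ 1) : |x * cos x - sin x| ≤ (3/4) * |x| ^ 3 := by
  have h := abs_key hx
  have h4 : |x| ^ 4 ≤ |x| ^ 3 := pow_le_pow_of_le_one (abs_nonneg x) hx (by norm_num)
  have h1 : |x * cos x - sin x| ≤ |x * cos x - sin x + x ^ 3 / 3| + |x ^ 3 / 3| := by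
    have he : x * cos x - sin x = (x * cos x - sin x + x ^ 3 / 3) - x ^ 3 / 3 := by ring
    conv_lhs => rw [he]
    exact abs_sub' _ _
  have h3 : |x ^ 3 / 3| = |x| ^ 3 / 3 := by rw [abs_div, abs_pow]; norm_num
  nlinarith [pow_nonneg (abs_nonneg x) 3]

lemma abs_num_big {x : ℝ} (hx : 1 ≤ |x|) : |x * cos x - sin x| ≤ 2 * |x| := by
  have hx2 : 1 ≤ x ^ 2 := one_le_sq_iff_one_le_abs x |>.2 hx
  have hsq : |x * cos x - sin x| ^ 2 ≤ (2 * |x|) ^ 2 := by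
    rw [sq_abs]
    nlinarith [sin_sq_add_cos_sq x, sq_nonneg (cos x + x * sin x), sq_abs x]
  exact (pow_le_pow_iff_left₀ (abs_nonneg _) (by positivity) two_ne_zero).1 hsq

lemma abs_num2_big {x : ℝ} (hx : 1 ≤ |x|) : |(2 - x ^ 2) * sin x - 2 * x * cos x| ≤ 3 * x ^ 2 := by
  have hx2 : 1 ≤ x ^ 2 := one_le_sq_iff_one_le_abs x |>.2 hx
  have hsq : |(2 - x ^ 2) * sin x - 2 * x * cos x| ^ 2 ≤ (3 * x ^ 2) ^ 2 := by
    rw [sq_abs]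
    nlinarith [sin_sq_add_cos_sq x, sq_nonneg ((2 - x ^ 2) * cos x + 2 * x * sin x), sq_nonneg x]
  exact (pow_le_pow_iff_left₀ (abs_nonneg _) (by positivity) two_ne_zero).1 hsq

lemma sg1_eq {x : ℝ} (hx : x ≠ 0) : sg1 x = (x * cos x - sin x) / x ^ 2 := by
  unfold sg1; rw [if_neg hx]; field_simp

lemma sg2_eq {x : ℝ} (hx : x ≠ 0) : sg2 x = ((2 - x ^ 2) * sin x - 2 * x * cos x) / x ^ 3 := by
  unfold sg2; rw [if_neg hx]; field_simp; ring

lemma abs_sg1_small {x : ℝ} (hx : |x| ≤ 1) : |sg1 x| ≤ (3/4) * |x| := by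
  rcases eq_or_ne x 0 with rfl | hx0
  · simp [sg1]
  · rw [sg1_eq hx0, abs_div, abs_pow]
    rw [div_le_iff₀ (by positivity)]
    calc |x * cos x - sin x| ≤ (3/4) * |x| ^ 3 := abs_num_small hx
      _ = 3/4 * |x| * |x| ^ 2 := by ring

lemma abs_sg1_big {x : ℝ} (hx : 1 ≤ |x|) : |sg1 x| ≤ 2 / |x| := by
  have hx0 : x ≠ 0 := by intro h; rw [h] at hx; simp at hx; linarith
  rw [sg1_eq hx0, abs_div, abs_pow]
  rw [div_le_div_iff₀ (by positivity) (by positivity)]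
  calc |x * cos x - sin x| * |x| ≤ (2 * |x|) * |x| := by
        exact mul_le_mul_of_nonneg_right (abs_num_big hx) (abs_nonneg x)
    _ = 2 * |x| ^ 2 := by ring

lemma abs_sg1_le_two (x : ℝ) : |sg1 x| ≤ 2 := by
  rcases le_or_gt (|x|) 1 with hx | hx
  · calc |sg1 x| ≤ (3/4) * |x| := abs_sg1_small hx
      _ ≤ 2 := by nlinarith [abs_nonneg x]
  · calc |sg1 x| ≤ 2 / |x| := abs_sg1_big hx.le
      _ ≤ 2 := by rw [div_le_iff₀ (by positivity)]; nlinarith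

lemma abs_sg1_le_inv {x : ℝ} (hx : x ≠ 0) : |sg1 x| ≤ 2 / |x| := by
  rcases le_or_gt (|x|) 1 with h1 | h1
  · have hp : 0 < |x| := abs_pos.2 hx
    calc |sg1 x| ≤ (3/4) * |x| := abs_sg1_small h1
      _ ≤ 2 / |x| := by rw [le_div_iff₀ hp]; nlinarith
  · exact abs_sg1_big h1.le

lemma abs_sg2_small {x : ℝ} (hx : |x| ≤ 1) : |sg2 x| ≤ 5/2 := by
  rcases eq_or_ne x 0 with rfl | hx0
  · rw [show sg2 0 = -(1/3) by simp [sg2], abs_neg, abs_of_nonneg (by norm_num : (0:ℝ) ≤ 1/3)]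
    norm_num
  · rw [sg2_eq hx0]
    have heq : ((2 - x ^ 2) * sin x - 2 * x * cos x) / x ^ 3
        = -(sin x / x) - 2 * ((x * cos x - sin x) / x ^ 3) := by field_simp; ring
    rw [heq]
    have h1 : |sin x / x| ≤ 1 := by
      rw [abs_div]; exact div_le_one_of_le₀ abs_sin_le_abs (abs_nonneg x)
    have h2 : |(x * cos x - sin x) / x ^ 3| ≤ 3/4 := by
      rw [abs_div, abs_pow, div_le_iff₀ (by positivity)]
      calc |x * cos x - sin x| ≤ (3/4) * |x| ^ 3 := abs_num_small hx
        _ = 3/4 * |x| ^ 3 := by ring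
    calc |-(sin x / x) - 2 * ((x * cos x - sin x) / x ^ 3)|
        ≤ |-(sin x / x)| + |2 * ((x * cos x - sin x) / x ^ 3)| := abs_sub' _ _
      _ ≤ 1 + 2 * (3/4) := by
          rw [abs_neg, abs_mul]
          have h3 : |(2:ℝ)| = 2 := by norm_num
          rw [h3]; gcongr
      _ = 5/2 := by norm_num

lemma abs_sg2_big {x : ℝ} (hx : 1 ≤ |x|) : |sg2 x| ≤ 3 / |x| := by
  have hx0 : x ≠ 0 := by intro h; rw [h] at hx; simp at hx; linarith
  rw [sg2_eq hx0, abs_div, abs_pow]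
  rw [div_le_div_iff₀ (by positivity) (by positivity)]
  calc |(2 - x ^ 2) * sin x - 2 * x * cos x| * |x| ≤ (3 * x ^ 2) * |x| := by
        exact mul_le_mul_of_nonneg_right (abs_num2_big hx) (abs_nonneg x)
    _ ≤ 3 * |x| ^ 3 := by rw [← sq_abs x]; ring_nf; exact le_refl _

lemma abs_sg2_le_three (x : ℝ) : |sg2 x| ≤ 3 := by
  rcases le_or_gt (|x|) 1 with hx | hx
  · linarith [abs_sg2_small hx]
  · calc |sg2 x| ≤ 3 / |x| := abs_sg2_big hx.le
      _ ≤ 3 := by rw [div_le_iff₀ (by positivity)]; nlinarith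

lemma abs_sg2_le_inv {x : ℝ} (hx : x ≠ 0) : |sg2 x| ≤ 3 / |x| := by
  rcases le_or_gt (|x|) 1 with h1 | h1
  · have hp : 0 < |x| := abs_pos.2 hx
    calc |sg2 x| ≤ 5/2 := abs_sg2_small h1
      _ ≤ 3 / |x| := by rw [le_div_iff₀ hp]; nlinarith
  · exact abs_sg2_big h1.le

lemma tendsto_abs_zero : Filter.Tendsto (fun y : ℝ => |y|) (nhdsWithin 0 {(0:ℝ)}ᶜ) (nhds 0) :=
  (continuous_abs.tendsto' 0 0 abs_zero).mono_left nhdsWithin_le_nhds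

lemma hasDerivAt_sinc (x : ℝ) : HasDerivAt sinc (sg1 x) x := by
  rcases eq_or_ne x 0 with rfl | hx
  · rw [show sg1 0 = 0 by simp [sg1], hasDerivAt_iff_tendsto_slope]
    rw [show (0:ℝ) = (0:ℝ) from rfl]
    apply squeeze_zero_norm' (a := fun y : ℝ => |y|) _ tendsto_abs_zero
    have h1 : ∀ᶠ y in nhdsWithin (0:ℝ) {(0:ℝ)}ᶜ, |y - 0| < 1 :=
      (eventually_abs_sub_lt 0 one_pos).filter_mono nhdsWithin_le_nhds
    filter_upwards [h1, self_mem_nhdsWithin] with y hy1 hy2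
    have hy0 : y ≠ 0 := hy2
    rw [sub_zero] at hy1
    have hs : slope sinc 0 y = (sin y - y) / y ^ 2 := by
      rw [slope_def_field]
      simp only [sinc, if_pos rfl, if_neg hy0]
      rw [sub_zero]
      field_simp
      ring_nf
      simp
    rw [hs, Real.norm_eq_abs, abs_div, abs_pow]
    rw [div_le_iff₀ (by positivity)]
    calc |sin y - y| ≤ |y| ^ 3 := abs_sin_sub hy1.le
      _ = |y| * |y| ^ 2 := by ring
  · have H : HasDerivAt (fun y => sin y / y) ((cos x * x - sin x * 1) / x ^ 2) x :=
      (Real.hasDerivAt_sin x).div (hasDerivAt_id x) hx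
    have hev : sinc =ᶠ[nhds x] fun y => sin y / y := by
      filter_upwards [eventually_ne_nhds hx] with y hy
      simp [sinc, hy]
    have H2 := H.congr_of_eventuallyEq hev
    refine H2.congr_deriv ?_
    symm
    rw [sg1_eq hx]
    ring

lemma hasDerivAt_sg1 (x : ℝ) : HasDerivAt sg1 (sg2 x) x := by
  rcases eq_or_ne x 0 with rfl | hx
  · rw [show sg2 0 = -(1/3) by simp [sg2], hasDerivAt_iff_tendsto_slope]
    rw [← tendsto_sub_nhds_zero_iff]
    apply squeeze_zero_norm' (a := fun y : ℝ => |y|) _ tendsto_abs_zero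
    have h1 : ∀ᶠ y in nhdsWithin (0:ℝ) {(0:ℝ)}ᶜ, |y - 0| < 1 :=
      (eventually_abs_sub_lt 0 one_pos).filter_mono nhdsWithin_le_nhds
    filter_upwards [h1, self_mem_nhdsWithin] with y hy1 hy2
    have hy0 : y ≠ 0 := hy2
    rw [sub_zero] at hy1
    have hs : slope sg1 0 y - -(1/3) = (y * cos y - sin y + y ^ 3 / 3) / y ^ 3 := by
      rw [slope_def_field, sg1_eq hy0]
      rw [show sg1 0 = 0 by simp [sg1]]
      field_simp
      ring
    rw [hs, Real.norm_eq_abs, abs_div, abs_pow]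
    rw [div_le_iff₀ (by positivity)]
    calc |y * cos y - sin y + y ^ 3 / 3| ≤ |y| ^ 4 / 6 := abs_key hy1.le
      _ ≤ |y| * |y| ^ 3 := by nlinarith [pow_nonneg (abs_nonneg y) 4]
  · have h1 : HasDerivAt (fun y => cos y / y) ((-sin x * x - cos x * 1) / x ^ 2) x :=
      (Real.hasDerivAt_cos x).div (hasDerivAt_id x) hx
    have h2 : HasDerivAt (fun y => sin y / y ^ 2)
        ((cos x * x ^ 2 - sin x * (2 * x ^ 1)) / (x ^ 2) ^ 2) x :=
      (Real.hasDerivAt_sin x).div (hasDerivAt_pow 2 x) (pow_ne_zero 2 hx)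
    have H := h1.sub h2
    have hev : sg1 =ᶠ[nhds x] fun y => cos y / y - sin y / y ^ 2 := by
      filter_upwards [eventually_ne_nhds hx] with y hy
      simp [sg1, hy]
    have H2 := H.congr_of_eventuallyEq hev
    refine H2.congr_deriv ?_
    symm
    rw [sg2_eq hx]
    field_simp
    ring

noncomputable def kf (x : ℝ) : ℝ := sinc (x/4) ^ 4
noncomputable def kf1 (x : ℝ) : ℝ := sinc (x/4) ^ 3 * sg1 (x/4)
noncomputable def kf2 (x : ℝ) : ℝ :=
  (3 * sinc (x/4) ^ 2 * sg1 (x/4) ^ 2 + sinc (x/4) ^ 3 * sg2 (x/4)) / 4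

lemma hasDerivAt_kf (x : ℝ) : HasDerivAt kf (kf1 x) x := by
  have h4 : HasDerivAt (fun y : ℝ => y / 4) (1/4 : ℝ) x := by
    simpa using (hasDerivAt_id x).div_const 4
  have hs : HasDerivAt (fun y : ℝ => sinc (y/4)) (sg1 (x/4) * (1/4)) x :=
    ((hasDerivAt_sinc (x/4)).comp x h4 :)
  have hp := hs.pow 4
  refine hp.congr_deriv ?_
  symm
  unfold kf1
  norm_num
  ring

lemma hasDerivAt_kf1 (x : ℝ) : HasDerivAt kf1 (kf2 x) x := by
  have h4 : HasDerivAt (fun y : ℝ => y / 4) (1/4 : ℝ) x := by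
    simpa using (hasDerivAt_id x).div_const 4
  have hs : HasDerivAt (fun y : ℝ => sinc (y/4)) (sg1 (x/4) * (1/4)) x :=
    ((hasDerivAt_sinc (x/4)).comp x h4 :)
  have hg : HasDerivAt (fun y : ℝ => sg1 (y/4)) (sg2 (x/4) * (1/4)) x :=
    ((hasDerivAt_sg1 (x/4)).comp x h4 :)
  have hp := (hs.pow 3).mul hg
  refine hp.congr_deriv ?_
  symm
  unfold kf2
  norm_num
  ring

lemma kf_nonneg (x : ℝ) : 0 ≤ kf x := by
  have h : kf x = (sinc (x/4) ^ 2) ^ 2 := by unfold kf; ring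
  rw [h]; positivity

lemma kf_abs_eq (x : ℝ) : kf x = |sinc (x/4)| ^ 4 := by
  rw [← abs_pow]
  exact (abs_of_nonneg (kf_nonneg x)).symm

lemma pow_mul_bound {a b A B : ℝ} (n : ℕ) (ha : |a| ≤ A) (hb : |b| ≤ B) :
    |a| ^ n * |b| ≤ A ^ n * B :=
  mul_le_mul (pow_le_pow_left₀ (abs_nonneg a) ha n) hb (abs_nonneg b)
    (pow_nonneg ((abs_nonneg a).trans ha) n)

lemma kf_le_one (x : ℝ) : kf x ≤ 1 := by
  rw [kf_abs_eq]
  exact pow_le_one₀ (abs_nonneg _) (abs_sinc_le_one _)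

lemma kf_le {x : ℝ} (hx : x ≠ 0) : kf x ≤ 256 / x ^ 4 := by
  have ht : x / 4 ≠ 0 := by simpa using hx
  have hxp : (0:ℝ) < |x| := abs_pos.2 hx
  have hx4 : |x / 4| = |x| / 4 := by rw [abs_div]; norm_num
  have hxpow : x ^ 4 = |x| ^ 4 := by
    rw [← abs_pow, abs_of_nonneg (by positivity : (0:ℝ) ≤ x ^ 4)]
  rw [kf_abs_eq]
  calc |sinc (x/4)| ^ 4 ≤ (1 / |x/4|) ^ 4 := by
        gcongr
        exact abs_sinc_le_inv ht
    _ = 256 / |x| ^ 4 := by rw [hx4]; field_simp; ring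
    _ = 256 / x ^ 4 := by rw [hxpow]

lemma kf1_abs_le_two (x : ℝ) : |kf1 x| ≤ 2 := by
  unfold kf1
  rw [abs_mul, abs_pow]
  calc |sinc (x/4)| ^ 3 * |sg1 (x/4)| ≤ 1 ^ 3 * 2 :=
        pow_mul_bound 3 (abs_sinc_le_one _) (abs_sg1_le_two _)
    _ = 2 := by norm_num

lemma kf1_abs_le {x : ℝ} (hx : x ≠ 0) : |kf1 x| ≤ 512 / x ^ 4 := by
  have ht : x / 4 ≠ 0 := by simpa using hx
  have htp : (0:ℝ) < |x/4| := abs_pos.2 ht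
  have hxp : (0:ℝ) < |x| := abs_pos.2 hx
  have hx4 : |x / 4| = |x| / 4 := by rw [abs_div]; norm_num
  have hxpow : x ^ 4 = |x| ^ 4 := by
    rw [← abs_pow, abs_of_nonneg (by positivity : (0:ℝ) ≤ x ^ 4)]
  have hxu : |x| = 4 * |x/4| := by rw [hx4]; ring
  have h256 : x ^ 4 = 256 * |x/4| ^ 4 := by rw [hxpow, hxu]; ring
  unfold kf1
  rw [abs_mul, abs_pow]
  rcases le_or_gt (|x/4|) 1 with hc | hc
  · calc |sinc (x/4)| ^ 3 * |sg1 (x/4)| ≤ 1 ^ 3 * (2 / |x/4|) :=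
          pow_mul_bound 3 (abs_sinc_le_one _) (abs_sg1_le_inv ht)
      _ = 2 / |x/4| := by norm_num
      _ ≤ 512 / x ^ 4 := by
          rw [h256, div_le_div_iff₀ htp (by positivity)]
          nlinarith [pow_le_pow_left₀ (abs_nonneg (x/4)) hc 3, htp.le]
  · calc |sinc (x/4)| ^ 3 * |sg1 (x/4)| ≤ (1 / |x/4|) ^ 3 * (2 / |x/4|) :=
          pow_mul_bound 3 (abs_sinc_le_inv ht) (abs_sg1_le_inv ht)
      _ = 2 / |x/4| ^ 4 := by field_simp
      _ ≤ 512 / x ^ 4 := by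
          rw [h256, div_le_div_iff₀ (by positivity) (by positivity)]
          nlinarith [pow_pos htp 4]

lemma bound_kf2_aux {a b c A B C : ℝ} (ha : |a| ≤ A) (hb : |b| ≤ B) (hc : |c| ≤ C) :
    |(3 * a ^ 2 * b ^ 2 + a ^ 3 * c) / 4| ≤ (3 * A ^ 2 * B ^ 2 + A ^ 3 * C) / 4 := by
  have hA : 0 ≤ A := (abs_nonneg a).trans ha
  have hB : 0 ≤ B := (abs_nonneg b).trans hb
  have hC : 0 ≤ C := (abs_nonneg c).trans hc
  have hp1 : |a| ^ 2 * |b| ^ 2 ≤ A ^ 2 * B ^ 2 := by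
    have := pow_mul_bound 2 ha hb
    have h2 : |b| ^ 2 ≤ B ^ 2 := pow_le_pow_left₀ (abs_nonneg b) hb 2
    exact mul_le_mul (pow_le_pow_left₀ (abs_nonneg a) ha 2) h2 (by positivity) (by positivity)
  have hp2 : |a| ^ 3 * |c| ≤ A ^ 3 * C := pow_mul_bound 3 ha hc
  have h0 : |3 * a ^ 2 * b ^ 2 + a ^ 3 * c| ≤ 3 * A ^ 2 * B ^ 2 + A ^ 3 * C := by
    calc |3 * a ^ 2 * b ^ 2 + a ^ 3 * c| ≤ |3 * a ^ 2 * b ^ 2| + |a ^ 3 * c| := abs_add_le _ _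
      _ = 3 * (|a| ^ 2 * |b| ^ 2) + |a| ^ 3 * |c| := by
          rw [abs_mul, abs_mul, abs_mul, abs_pow, abs_pow, abs_pow]
          norm_num
          ring
      _ ≤ 3 * (A ^ 2 * B ^ 2) + A ^ 3 * C := by linarith
      _ = 3 * A ^ 2 * B ^ 2 + A ^ 3 * C := by ring
  calc |(3 * a ^ 2 * b ^ 2 + a ^ 3 * c) / 4| = |3 * a ^ 2 * b ^ 2 + a ^ 3 * c| / 4 := by
        rw [abs_div]; norm_num
    _ ≤ (3 * A ^ 2 * B ^ 2 + A ^ 3 * C) / 4 := by linarith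

lemma kf2_abs_le_four (x : ℝ) : |kf2 x| ≤ 4 := by
  have := bound_kf2_aux (abs_sinc_le_one (x/4)) (abs_sg1_le_two (x/4)) (abs_sg2_le_three (x/4))
  unfold kf2
  calc |(3 * sinc (x/4) ^ 2 * sg1 (x/4) ^ 2 + sinc (x/4) ^ 3 * sg2 (x/4)) / 4|
      ≤ (3 * 1 ^ 2 * 2 ^ 2 + 1 ^ 3 * 3) / 4 := this
    _ ≤ 4 := by norm_num

lemma kf2_abs_le {x : ℝ} (hx : x ≠ 0) : |kf2 x| ≤ 1024 / x ^ 4 := by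
  have ht : x / 4 ≠ 0 := by simpa using hx
  have htp : (0:ℝ) < |x/4| := abs_pos.2 ht
  have hxp : (0:ℝ) < |x| := abs_pos.2 hx
  have hx4 : |x / 4| = |x| / 4 := by rw [abs_div]; norm_num
  have hxpow : x ^ 4 = |x| ^ 4 := by
    rw [← abs_pow, abs_of_nonneg (by positivity : (0:ℝ) ≤ x ^ 4)]
  have hxu : |x| = 4 * |x/4| := by rw [hx4]; ring
  have h256 : x ^ 4 = 256 * |x/4| ^ 4 := by rw [hxpow, hxu]; ring
  rcases le_or_gt (|x/4|) 1 with hc | hc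
  · calc |kf2 x| ≤ 4 := kf2_abs_le_four x
      _ ≤ 1024 / x ^ 4 := by
          rw [h256, le_div_iff₀ (by positivity)]
          nlinarith [pow_le_pow_left₀ (abs_nonneg (x/4)) hc 4]
  · have hb := bound_kf2_aux (abs_sinc_le_inv ht) (abs_sg1_le_inv ht) (abs_sg2_le_inv ht)
    have hmid : ∀ u : ℝ, 0 < u →
        (3 * (1/u) ^ 2 * (2/u) ^ 2 + (1/u) ^ 3 * (3/u)) / 4 = (15 / 4) / u ^ 4 := by
      intro u hu; field_simp; ring
    unfold kf2
    calc |(3 * sinc (x/4) ^ 2 * sg1 (x/4) ^ 2 + sinc (x/4) ^ 3 * sg2 (x/4)) / 4|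
        ≤ (3 * (1 / |x/4|) ^ 2 * (2 / |x/4|) ^ 2 + (1 / |x/4|) ^ 3 * (3 / |x/4|)) / 4 := hb
      _ = (15 / 4) / |x/4| ^ 4 := hmid _ htp
      _ ≤ 1024 / x ^ 4 := by
          rw [h256, div_le_div_iff₀ (by positivity) (by positivity)]
          nlinarith [pow_pos htp 4]

section Multi
variable {d : ℕ}

noncomputable def cg (d : ℕ) (i : Fin d) (x : EuclideanSpace ℝ (Fin d)) : ℝ :=
  kf1 (x i) * ∏ j ∈ Finset.univ.erase i, kf (x j)

noncomputable def F1 (d : ℕ) (x : EuclideanSpace ℝ (Fin d)) :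
    EuclideanSpace ℝ (Fin d) →L[ℝ] ℝ :=
  ∑ i, cg d i x • (EuclideanSpace.proj i : EuclideanSpace ℝ (Fin d) →L[ℝ] ℝ)

lemma Psi1_eq (x : EuclideanSpace ℝ (Fin d)) : Psi1 d x = ∏ i, kf (x i) := rfl

lemma hasFDerivAt_coord (i : Fin d) (x : EuclideanSpace ℝ (Fin d)) :
    HasFDerivAt (fun x : EuclideanSpace ℝ (Fin d) => kf (x i))
      (kf1 (x i) • (EuclideanSpace.proj i : EuclideanSpace ℝ (Fin d) →L[ℝ] ℝ)) x :=
  ((hasDerivAt_kf (x i)).comp_hasFDerivAt x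
    (EuclideanSpace.proj i : EuclideanSpace ℝ (Fin d) →L[ℝ] ℝ).hasFDerivAt :)

lemma hasFDerivAt_coord1 (i : Fin d) (x : EuclideanSpace ℝ (Fin d)) :
    HasFDerivAt (fun x : EuclideanSpace ℝ (Fin d) => kf1 (x i))
      (kf2 (x i) • (EuclideanSpace.proj i : EuclideanSpace ℝ (Fin d) →L[ℝ] ℝ)) x :=
  ((hasDerivAt_kf1 (x i)).comp_hasFDerivAt x
    (EuclideanSpace.proj i : EuclideanSpace ℝ (Fin d) →L[ℝ] ℝ).hasFDerivAt :)

lemma hasFDerivAt_Psi1 (x : EuclideanSpace ℝ (Fin d)) :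
    HasFDerivAt (Psi1 d) (F1 d x) x := by
  have h := HasFDerivAt.finset_prod (u := (Finset.univ : Finset (Fin d)))
    (g := fun i (x : EuclideanSpace ℝ (Fin d)) => kf (x i))
    (g' := fun i => kf1 (x i) • (EuclideanSpace.proj i : EuclideanSpace ℝ (Fin d) →L[ℝ] ℝ))
    (fun i _ => hasFDerivAt_coord i x)
  refine h.congr_fderiv ?_
  symm
  unfold F1 cg
  rw [Finset.sum_congr rfl]
  intro i _
  rw [smul_smul, mul_comm]

noncomputable def Dcg (d : ℕ) (i : Fin d) (x : EuclideanSpace ℝ (Fin d)) :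
    EuclideanSpace ℝ (Fin d) →L[ℝ] ℝ :=
  (kf2 (x i) * ∏ j ∈ Finset.univ.erase i, kf (x j)) •
      (EuclideanSpace.proj i : EuclideanSpace ℝ (Fin d) →L[ℝ] ℝ)
    + ∑ j ∈ Finset.univ.erase i,
        (kf1 (x i) * ((∏ k ∈ (Finset.univ.erase i).erase j, kf (x k)) * kf1 (x j))) •
          (EuclideanSpace.proj j : EuclideanSpace ℝ (Fin d) →L[ℝ] ℝ)

lemma hasFDerivAt_cg (i : Fin d) (x : EuclideanSpace ℝ (Fin d)) :
    HasFDerivAt (cg d i) (Dcg d i x) x := by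
  have h2 := HasFDerivAt.finset_prod (u := Finset.univ.erase i)
    (g := fun j (x : EuclideanSpace ℝ (Fin d)) => kf (x j))
    (g' := fun j => kf1 (x j) • (EuclideanSpace.proj j : EuclideanSpace ℝ (Fin d) →L[ℝ] ℝ))
    (fun j _ => hasFDerivAt_coord j x)
  have h := (hasFDerivAt_coord1 i x).mul h2
  refine h.congr_fderiv ?_
  symm
  unfold Dcg
  rw [add_comm]
  congr 1
  · rw [Finset.smul_sum, Finset.sum_congr rfl]
    intro j _
    rw [smul_smul, smul_smul]
    ring_nf
  · rw [smul_smul, mul_comm]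

noncomputable def F2 (d : ℕ) (x : EuclideanSpace ℝ (Fin d)) :
    EuclideanSpace ℝ (Fin d) →L[ℝ] (EuclideanSpace ℝ (Fin d) →L[ℝ] ℝ) :=
  ∑ i, (Dcg d i x).smulRight (EuclideanSpace.proj i : EuclideanSpace ℝ (Fin d) →L[ℝ] ℝ)

lemma hasFDerivAt_F1 (x : EuclideanSpace ℝ (Fin d)) :
    HasFDerivAt (F1 d) (F2 d x) x := by
  unfold F1 F2
  exact HasFDerivAt.fun_sum fun i _ => (hasFDerivAt_cg i x).smul_const
    (EuclideanSpace.proj i : EuclideanSpace ℝ (Fin d) →L[ℝ] ℝ)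

lemma proj_single (i u : Fin d) :
    (EuclideanSpace.proj i : EuclideanSpace ℝ (Fin d) →L[ℝ] ℝ)
      (EuclideanSpace.single u (1:ℝ)) = if i = u then 1 else 0 := by
  simp [EuclideanSpace.single_apply]

lemma eval_F1 (x : EuclideanSpace ℝ (Fin d)) (u : Fin d) :
    F1 d x (EuclideanSpace.single u (1:ℝ)) = cg d u x := by
  unfold F1
  rw [ContinuousLinearMap.sum_apply]
  rw [Finset.sum_eq_single u]
  · rw [ContinuousLinearMap.smul_apply, proj_single, if_pos rfl, smul_eq_mul, mul_one]
  · intro i _ hiu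
    rw [ContinuousLinearMap.smul_apply, proj_single, if_neg hiu, smul_eq_mul, mul_zero]
  · intro hu; exact absurd (Finset.mem_univ u) hu

lemma eval_Dcg (x : EuclideanSpace ℝ (Fin d)) (i u : Fin d) :
    Dcg d i x (EuclideanSpace.single u (1:ℝ)) =
      (if i = u then kf2 (x i) * ∏ j ∈ Finset.univ.erase i, kf (x j) else
        kf1 (x i) * ((∏ k ∈ (Finset.univ.erase i).erase u, kf (x k)) * kf1 (x u))) := by
  unfold Dcg
  rw [ContinuousLinearMap.add_apply, ContinuousLinearMap.smul_apply, proj_single,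
    ContinuousLinearMap.sum_apply]
  have hsum : ∑ j ∈ Finset.univ.erase i,
      ((kf1 (x i) * ((∏ k ∈ (Finset.univ.erase i).erase j, kf (x k)) * kf1 (x j))) •
        (EuclideanSpace.proj j : EuclideanSpace ℝ (Fin d) →L[ℝ] ℝ))
          (EuclideanSpace.single u (1:ℝ)) =
      if i = u then 0 else
        kf1 (x i) * ((∏ k ∈ (Finset.univ.erase i).erase u, kf (x k)) * kf1 (x u)) := by
    by_cases hiu : i = u
    · rw [if_pos hiu]; subst hiu
      apply Finset.sum_eq_zero
      intro j hj
      rw [ContinuousLinearMap.smul_apply, proj_single, if_neg (Finset.ne_of_mem_erase hj),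
        smul_eq_mul, mul_zero]
    · rw [if_neg hiu]
      have hu : u ∈ Finset.univ.erase i :=
        Finset.mem_erase.2 ⟨fun h => hiu h.symm, Finset.mem_univ u⟩
      rw [Finset.sum_eq_single_of_mem u hu]
      · rw [ContinuousLinearMap.smul_apply, proj_single, if_pos rfl, smul_eq_mul, mul_one]
      · intro j _ hju
        rw [ContinuousLinearMap.smul_apply, proj_single, if_neg hju, smul_eq_mul, mul_zero]
  rw [hsum]
  by_cases hiu : i = u
  · rw [if_pos hiu, if_pos hiu, if_pos hiu, smul_eq_mul, mul_one, add_zero]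
  · rw [if_neg hiu, if_neg hiu, if_neg hiu, smul_eq_mul, mul_zero, zero_add]

lemma eval_F2 (x : EuclideanSpace ℝ (Fin d)) (u v : Fin d) :
    F2 d x (EuclideanSpace.single u (1:ℝ)) (EuclideanSpace.single v (1:ℝ)) =
      (if v = u then kf2 (x v) * ∏ j ∈ Finset.univ.erase v, kf (x j) else
        kf1 (x v) * ((∏ k ∈ (Finset.univ.erase v).erase u, kf (x k)) * kf1 (x u))) := by
  unfold F2
  rw [ContinuousLinearMap.sum_apply, ContinuousLinearMap.sum_apply]
  have hstep : ∀ i : Fin d,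
      (((Dcg d i x).smulRight (EuclideanSpace.proj i : EuclideanSpace ℝ (Fin d) →L[ℝ] ℝ))
          (EuclideanSpace.single u (1:ℝ))) (EuclideanSpace.single v (1:ℝ)) =
      (Dcg d i x (EuclideanSpace.single u (1:ℝ))) * (if i = v then 1 else 0) := by
    intro i
    rw [ContinuousLinearMap.smulRight_apply, ContinuousLinearMap.smul_apply, proj_single,
      smul_eq_mul]
  rw [Finset.sum_congr rfl fun i _ => hstep i]
  rw [Finset.sum_eq_single_of_mem v (Finset.mem_univ v)]
  · rw [if_pos rfl, mul_one, eval_Dcg]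
  · intro j _ hjv
    rw [if_neg hjv, mul_zero]

lemma fderiv_Psi1_eq : fderiv ℝ (Psi1 d) = F1 d :=
  funext fun x => (hasFDerivAt_Psi1 x).fderiv

lemma iterated_one (x : EuclideanSpace ℝ (Fin d)) (u : Fin d) :
    iteratedFDeriv ℝ 1 (Psi1 d) x ![EuclideanSpace.single u (1:ℝ)] = cg d u x := by
  rw [iteratedFDeriv_one_apply]
  simp only [Matrix.cons_val_zero]
  rw [fderiv_Psi1_eq, eval_F1]

lemma iterated_two (x : EuclideanSpace ℝ (Fin d)) (u v : Fin d) :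
    iteratedFDeriv ℝ 2 (Psi1 d) x
        ![EuclideanSpace.single u (1:ℝ), EuclideanSpace.single v (1:ℝ)] =
      (if v = u then kf2 (x v) * ∏ j ∈ Finset.univ.erase v, kf (x j) else
        kf1 (x v) * ((∏ k ∈ (Finset.univ.erase v).erase u, kf (x k)) * kf1 (x u))) := by
  rw [iteratedFDeriv_two_apply]
  simp only [Matrix.cons_val_zero, Matrix.cons_val_one, Matrix.head_cons]
  rw [fderiv_Psi1_eq, (hasFDerivAt_F1 x).fderiv, eval_F2]

lemma prod_kf_nonneg (x : EuclideanSpace ℝ (Fin d)) (s : Finset (Fin d)) :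
    0 ≤ ∏ j ∈ s, kf (x j) :=
  Finset.prod_nonneg fun j _ => kf_nonneg (x j)

lemma prod_kf_le_one (x : EuclideanSpace ℝ (Fin d)) (s : Finset (Fin d)) :
    ∏ j ∈ s, kf (x j) ≤ 1 :=
  Finset.prod_le_one (fun j _ => kf_nonneg (x j)) (fun j _ => kf_le_one (x j))

lemma prod_kf_le (x : EuclideanSpace ℝ (Fin d)) {s : Finset (Fin d)} {i : Fin d}
    (hi : i ∈ s) (hx : x i ≠ 0) : ∏ j ∈ s, kf (x j) ≤ 256 / (x i) ^ 4 := by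
  rw [← Finset.mul_prod_erase s _ hi]
  calc kf (x i) * ∏ j ∈ s.erase i, kf (x j) ≤ (256 / (x i) ^ 4) * 1 := by
        apply mul_le_mul (kf_le hx) (prod_kf_le_one x _) (prod_kf_nonneg x _) (by positivity)
    _ = 256 / (x i) ^ 4 := mul_one _

end Multi

lemma mul3_bound {a p b A P B : ℝ} (ha : |a| ≤ A) (hp : 0 ≤ p) (hpP : p ≤ P) (hb : |b| ≤ B) :
    |a| * (p * |b|) ≤ A * (P * B) :=
  mul_le_mul ha (mul_le_mul hpP hb (abs_nonneg b) (hp.trans hpP))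
    (by positivity) ((abs_nonneg a).trans ha)

theorem stmt_12 (d : ℕ) (hd : 1 ≤ d) (h : EuclideanSpace ℝ (Fin d)) (hne : h ≠ 0) :
    Psi1 d h ≤ 256 * (d : ℝ) ^ 2 / ‖h‖ ^ 4 ∧
    (∀ u : Fin d, |iteratedFDeriv ℝ 1 (Psi1 d) h ![EuclideanSpace.single u (1 : ℝ)]| ≤
      512 * (d : ℝ) ^ 2 / ‖h‖ ^ 4) ∧
    (∀ u v : Fin d, |iteratedFDeriv ℝ 2 (Psi1 d) h
        ![EuclideanSpace.single u (1 : ℝ), EuclideanSpace.single v (1 : ℝ)]| ≤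
      1024 * (d : ℝ) ^ 2 / ‖h‖ ^ 4) := by
  classical
  have hpos : 0 < ‖h‖ := norm_pos_iff.2 hne
  have hd0 : (0:ℝ) < d := by
    have : 0 < d := lt_of_lt_of_le Nat.zero_lt_one hd
    exact_mod_cast this
  have hsum : ‖h‖ ^ 2 = ∑ i, (h i) ^ 2 := by
    rw [EuclideanSpace.norm_eq, Real.sq_sqrt (by positivity)]
    simp [Real.norm_eq_abs, sq_abs]
  have : Nonempty (Fin d) := Fin.pos_iff_nonempty.1 (lt_of_lt_of_le Nat.zero_lt_one hd)
  have hconst : ∑ _i : Fin d, ‖h‖ ^ 2 / (d:ℝ) = ‖h‖ ^ 2 := by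
    rw [Finset.sum_const, Finset.card_univ, Fintype.card_fin, nsmul_eq_mul]
    field_simp
  obtain ⟨i₀, -, hi₀⟩ := Finset.exists_le_of_sum_le (Finset.univ_nonempty)
    (le_of_eq (by rw [hconst, ← hsum]) :
      ∑ _i : Fin d, ‖h‖ ^ 2 / (d:ℝ) ≤ ∑ i, (h i) ^ 2)
  have hsq : 0 < (h i₀) ^ 2 := lt_of_lt_of_le (by positivity) hi₀
  have hxi : h i₀ ≠ 0 := by
    intro hz
    rw [hz] at hsq
    simp at hsq
  have key : ‖h‖ ^ 4 ≤ (d:ℝ) ^ 2 * (h i₀) ^ 4 := by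
    have h2 : ‖h‖ ^ 2 ≤ (d:ℝ) * (h i₀) ^ 2 := by
      rw [div_le_iff₀ hd0] at hi₀
      linarith
    calc ‖h‖ ^ 4 = (‖h‖ ^ 2) ^ 2 := by ring
      _ ≤ ((d:ℝ) * (h i₀) ^ 2) ^ 2 := pow_le_pow_left₀ (by positivity) h2 2
      _ = (d:ℝ) ^ 2 * (h i₀) ^ 4 := by ring
  have main : ∀ C : ℝ, 0 ≤ C → C / (h i₀) ^ 4 ≤ C * (d:ℝ) ^ 2 / ‖h‖ ^ 4 := by
    intro C hC
    rw [div_le_div_iff₀ (by positivity) (by positivity)]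
    calc C * ‖h‖ ^ 4 ≤ C * ((d:ℝ) ^ 2 * (h i₀) ^ 4) := mul_le_mul_of_nonneg_left key hC
      _ = C * (d:ℝ) ^ 2 * (h i₀) ^ 4 := by ring
  refine ⟨?_, ?_, ?_⟩
  · calc Psi1 d h = ∏ i, kf (h i) := Psi1_eq h
      _ ≤ 256 / (h i₀) ^ 4 := prod_kf_le h (Finset.mem_univ i₀) hxi
      _ ≤ 256 * (d:ℝ) ^ 2 / ‖h‖ ^ 4 := main 256 (by norm_num)
  · intro u
    rw [iterated_one]
    have hb : |cg d u h| ≤ 512 / (h i₀) ^ 4 := by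
      rw [show cg d u h = kf1 (h u) * ∏ j ∈ Finset.univ.erase u, kf (h j) from rfl, abs_mul,
        abs_of_nonneg (prod_kf_nonneg h _)]
      by_cases hu : u = i₀
      · subst hu
        calc |kf1 (h u)| * ∏ j ∈ Finset.univ.erase u, kf (h j) ≤ (512 / (h u) ^ 4) * 1 :=
              mul_le_mul (kf1_abs_le hxi) (prod_kf_le_one h _) (prod_kf_nonneg h _)
                (by positivity)
          _ = 512 / (h u) ^ 4 := mul_one _
      · have hi : i₀ ∈ Finset.univ.erase u :=
          Finset.mem_erase.2 ⟨fun hh => hu hh.symm, Finset.mem_univ _⟩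
        calc |kf1 (h u)| * ∏ j ∈ Finset.univ.erase u, kf (h j) ≤ 2 * (256 / (h i₀) ^ 4) :=
              mul_le_mul (kf1_abs_le_two _) (prod_kf_le h hi hxi) (prod_kf_nonneg h _)
                (by norm_num)
          _ = 512 / (h i₀) ^ 4 := by ring
    exact hb.trans (main 512 (by norm_num))
  · intro u v
    rw [iterated_two]
    have hb : |if v = u then kf2 (h v) * ∏ j ∈ Finset.univ.erase v, kf (h j) else
        kf1 (h v) * ((∏ k ∈ (Finset.univ.erase v).erase u, kf (h k)) * kf1 (h u))|
        ≤ 1024 / (h i₀) ^ 4 := by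
      by_cases hvu : v = u
      · rw [if_pos hvu]
        rw [abs_mul, abs_of_nonneg (prod_kf_nonneg h _)]
        by_cases hv : v = i₀
        · subst hv
          calc |kf2 (h v)| * ∏ j ∈ Finset.univ.erase v, kf (h j) ≤ (1024 / (h v) ^ 4) * 1 :=
                mul_le_mul (kf2_abs_le hxi) (prod_kf_le_one h _) (prod_kf_nonneg h _)
                  (by positivity)
            _ = 1024 / (h v) ^ 4 := mul_one _
        · have hi : i₀ ∈ Finset.univ.erase v :=
            Finset.mem_erase.2 ⟨fun hh => hv hh.symm, Finset.mem_univ _⟩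
          calc |kf2 (h v)| * ∏ j ∈ Finset.univ.erase v, kf (h j) ≤ 4 * (256 / (h i₀) ^ 4) :=
                mul_le_mul (kf2_abs_le_four _) (prod_kf_le h hi hxi) (prod_kf_nonneg h _)
                  (by norm_num)
            _ = 1024 / (h i₀) ^ 4 := by ring
      · rw [if_neg hvu, abs_mul, abs_mul, abs_of_nonneg (prod_kf_nonneg h _)]
        by_cases hv : v = i₀
        · subst hv
          calc |kf1 (h v)| * ((∏ j ∈ (Finset.univ.erase v).erase u, kf (h j)) * |kf1 (h u)|)
              ≤ (512 / (h v) ^ 4) * (1 * 2) :=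
                mul3_bound (kf1_abs_le hxi) (prod_kf_nonneg h _) (prod_kf_le_one h _)
                  (kf1_abs_le_two _)
            _ = 1024 / (h v) ^ 4 := by ring
        · by_cases hu : u = i₀
          · subst hu
            calc |kf1 (h v)| * ((∏ j ∈ (Finset.univ.erase v).erase u, kf (h j)) * |kf1 (h u)|)
                ≤ 2 * (1 * (512 / (h u) ^ 4)) := by
                  refine mul_le_mul (kf1_abs_le_two _) ?_
                    (mul_nonneg (prod_kf_nonneg h _) (abs_nonneg _)) (by norm_num)
                  exact mul_le_mul (prod_kf_le_one h _) (kf1_abs_le hxi) (abs_nonneg _)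
                    (by norm_num)
              _ = 1024 / (h u) ^ 4 := by ring
          · have hi : i₀ ∈ (Finset.univ.erase v).erase u :=
              Finset.mem_erase.2 ⟨fun hh => hu hh.symm,
                Finset.mem_erase.2 ⟨fun hh => hv hh.symm, Finset.mem_univ _⟩⟩
            calc |kf1 (h v)| * ((∏ j ∈ (Finset.univ.erase v).erase u, kf (h j)) * |kf1 (h u)|)
                ≤ 2 * ((256 / (h i₀) ^ 4) * 2) :=
                  mul3_bound (kf1_abs_le_two _) (prod_kf_nonneg h _)
                    (prod_kf_le h hi hxi) (kf1_abs_le_two _)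
              _ = 1024 / (h i₀) ^ 4 := by ring
    exact hb.trans (main 1024 (by norm_num))
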